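/- arXiv:2508.16824 — 9 statements merged into one kernel-verified Lean document; each statement's English description precedes it below -/
import Mathlib

section
/- Let M̂ and M̃ be n×n real matrices with M̂ ≤ M̃ entrywise, and let q̂, q̃ ∈ ℝⁿ with q̂ ≤ q̃ entrywise. Suppose z̃ solves LCP(M̃, q̃) and ẑ solves LCP(M̂, q̂). If M̃ is an M-matrix or M̂ is an M-matrix, then z̃ ≤ ẑ entrywise. -/
/-- `z` solves the linear complementarity problem LCP(M, q). -/
def SolvesLCP {n : ℕ} (M : Matrix (Fin n) (Fin n) ℝ) (q z : Fin n → ℝ) : Prop :=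
  (∀ i, 0 ≤ q i + M.mulVec z i) ∧ (∀ i, 0 ≤ z i) ∧ (∑ i, (q i + M.mulVec z i) * z i) = 0

/-- An M-matrix: nonpositive off-diagonal entries, invertible, nonnegative inverse. -/
def IsMMatrix {n : ℕ} (M : Matrix (Fin n) (Fin n) ℝ) : Prop :=
  (∀ i j, i ≠ j → M i j ≤ 0) ∧ IsUnit M ∧ (∀ i j, 0 ≤ M⁻¹ i j)

lemma lcp_comp {n : ℕ} {M : Matrix (Fin n) (Fin n) ℝ} {q z : Fin n → ℝ}
    (h : SolvesLCP M q z) : ∀ i, 0 < z i → q i + M.mulVec z i = 0 := by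
  obtain ⟨h1, h2, h3⟩ := h
  intro i hi
  have hnn : ∀ j ∈ Finset.univ, 0 ≤ (q j + M.mulVec z j) * z j :=
    fun j _ => mul_nonneg (h1 j) (h2 j)
  have := (Finset.sum_eq_zero_iff_of_nonneg hnn).mp h3 i (Finset.mem_univ i)
  rcases mul_eq_zero.mp this with h | h
  · exact h
  · exact absurd h (ne_of_gt hi)

/-- Key comparison lemma for M-matrices. -/
lemma mmatrix_compare {n : ℕ} (M : Matrix (Fin n) (Fin n) ℝ)
    (hZ : ∀ i j, i ≠ j → M i j ≤ 0) (hU : IsUnit M) (hInv : ∀ i j, 0 ≤ M⁻¹ i j)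
    (a b : Fin n → ℝ)
    (hab : ∀ i, b i < a i → M.mulVec (a - b) i ≤ 0) : ∀ i, a i ≤ b i := by
  by_contra h
  push_neg at h
  obtain ⟨k, hk⟩ := h
  have hdet : IsUnit M.det := (Matrix.isUnit_iff_isUnit_det M).mp hU
  set u : Fin n → ℝ := M⁻¹.mulVec 1 with hu
  have hMu : M.mulVec u = 1 := by
    rw [hu, Matrix.mulVec_mulVec, Matrix.mul_nonsing_inv _ hdet, Matrix.one_mulVec]
  have hupos : ∀ i, 0 < u i := by
    intro i
    have hnn : ∀ j ∈ Finset.univ, (0:ℝ) ≤ M⁻¹ i j * 1 := by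
      intro j _; simpa using hInv i j
    have hui : u i = ∑ j, M⁻¹ i j * 1 := by
      simp [hu, Matrix.mulVec, dotProduct]
    rcases lt_or_eq_of_le (Finset.sum_nonneg hnn) with hlt | heq
    · rw [hui]; exact hlt
    · exfalso
      have hz : ∀ j, M⁻¹ i j = 0 := by
        intro j
        have := (Finset.sum_eq_zero_iff_of_nonneg hnn).mp heq.symm j (Finset.mem_univ j)
        simpa using this
      have h1 : (M⁻¹ * M) i i = 0 := by
        simp [Matrix.mul_apply, hz]
      rw [Matrix.nonsing_inv_mul _ hdet] at h1
      simp at h1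
  set x : Fin n → ℝ := fun i => max (a i - b i) 0 with hx
  obtain ⟨i0, _, hmax⟩ := Finset.exists_max_image Finset.univ (fun i => x i / u i)
    ⟨k, Finset.mem_univ k⟩
  set t := x i0 / u i0 with ht
  have hxk : 0 < x k := by
    simp only [hx]
    exact lt_max_of_lt_left (by linarith)
  have htpos : 0 < t :=
    lt_of_lt_of_le (div_pos hxk (hupos k)) (hmax k (Finset.mem_univ k))
  have hxle : ∀ j, x j ≤ t * u j := by
    intro j
    have h1 := hmax j (Finset.mem_univ j)
    have h2 : x j / u j * u j ≤ t * u j :=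
      mul_le_mul_of_nonneg_right h1 (le_of_lt (hupos j))
    rwa [div_mul_cancel₀ _ (ne_of_gt (hupos j))] at h2
  have hxi0 : x i0 = t * u i0 := by
    rw [ht, div_mul_cancel₀ _ (ne_of_gt (hupos i0))]
  have hxi0pos : 0 < x i0 := by
    rw [hxi0]; exact mul_pos htpos (hupos i0)
  have hi0 : b i0 < a i0 := by
    by_contra hc
    push_neg at hc
    have : x i0 = 0 := by simp only [hx]; exact max_eq_right (by linarith)
    linarith
  have hxi0' : x i0 = a i0 - b i0 := max_eq_left (by linarith)
  -- Step A : t ≤ (M x) i0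
  have hA : t ≤ M.mulVec x i0 := by
    have e1 : M.mulVec x i0 = ∑ j, M i0 j * x j := by
      simp [Matrix.mulVec, dotProduct]
    have e2 : ∑ j, M i0 j * (t * u j) ≤ ∑ j, M i0 j * x j := by
      apply Finset.sum_le_sum
      intro j _
      by_cases hj : j = i0
      · subst hj; rw [hxi0]
      · exact mul_le_mul_of_nonpos_left (hxle j) (hZ i0 j (Ne.symm hj))
    have e3 : ∑ j, M i0 j * (t * u j) = t := by
      have : ∑ j, M i0 j * (t * u j) = t * ∑ j, M i0 j * u j := by
        rw [Finset.mul_sum]; congr 1; funext j; ring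
      rw [this]
      have : ∑ j, M i0 j * u j = M.mulVec u i0 := by
        simp [Matrix.mulVec, dotProduct]
      rw [this, hMu]; simp
    rw [e1]; rw [← e3]; exact e2
  -- Step B : (M x) i0 ≤ (M (a-b)) i0
  have hB : M.mulVec x i0 ≤ M.mulVec (a - b) i0 := by
    have e1 : M.mulVec x i0 = ∑ j, M i0 j * x j := by
      simp [Matrix.mulVec, dotProduct]
    have e2 : M.mulVec (a - b) i0 = ∑ j, M i0 j * (a j - b j) := by
      simp [Matrix.mulVec, dotProduct]
    rw [e1, e2]
    apply Finset.sum_le_sum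
    intro j _
    by_cases hj : j = i0
    · subst hj; rw [hxi0']
    · exact mul_le_mul_of_nonpos_left (le_max_left _ _) (hZ i0 j (Ne.symm hj))
  have := hab i0 hi0
  linarith

theorem stmt0 {n : ℕ} (Mhat Mtil : Matrix (Fin n) (Fin n) ℝ) (qhat qtil zhat ztil : Fin n → ℝ)
    (hM : ∀ i j, Mhat i j ≤ Mtil i j) (hq : ∀ i, qhat i ≤ qtil i)
    (hZtil : SolvesLCP Mtil qtil ztil) (hZhat : SolvesLCP Mhat qhat zhat)
    (hMM : IsMMatrix Mtil ∨ IsMMatrix Mhat) :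
    ∀ i, ztil i ≤ zhat i := by
  have hcomp := lcp_comp hZtil
  have hztilpos : ∀ i, zhat i < ztil i → 0 < ztil i := fun i hi =>
    lt_of_le_of_lt (hZhat.2.1 i) hi
  rcases hMM with hMM | hMM
  · obtain ⟨hZ, hU, hInv⟩ := hMM
    apply mmatrix_compare Mtil hZ hU hInv
    intro i hi
    have h0 : qtil i + Mtil.mulVec ztil i = 0 := hcomp i (hztilpos i hi)
    have hle : Mhat.mulVec zhat i ≤ Mtil.mulVec zhat i := by
      simp only [Matrix.mulVec, dotProduct]
      exact Finset.sum_le_sum fun j _ =>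
        mul_le_mul_of_nonneg_right (hM i j) (hZhat.2.1 j)
    have hfeas : 0 ≤ qhat i + Mhat.mulVec zhat i := hZhat.1 i
    have : Mtil.mulVec (ztil - zhat) i = Mtil.mulVec ztil i - Mtil.mulVec zhat i := by
      rw [Matrix.mulVec_sub]; rfl
    rw [this]
    have := hq i
    linarith
  · obtain ⟨hZ, hU, hInv⟩ := hMM
    apply mmatrix_compare Mhat hZ hU hInv
    intro i hi
    have h0 : qtil i + Mtil.mulVec ztil i = 0 := hcomp i (hztilpos i hi)
    have hle : Mhat.mulVec ztil i ≤ Mtil.mulVec ztil i := by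
      simp only [Matrix.mulVec, dotProduct]
      exact Finset.sum_le_sum fun j _ =>
        mul_le_mul_of_nonneg_right (hM i j) (hZtil.2.1 j)
    have hfeas : 0 ≤ qhat i + Mhat.mulVec zhat i := hZhat.1 i
    have : Mhat.mulVec (ztil - zhat) i = Mhat.mulVec ztil i - Mhat.mulVec zhat i := by
      rw [Matrix.mulVec_sub]; rfl
    rw [this]
    have := hq i
    linarith
end

section
/- Let M̂ and M̃ be n×n real matrices with M̂ ≤ M̃ entrywise, and let q̂, q̃ ∈ ℝⁿ with q̂ ≤ q̃ entrywise. Suppose z̃ solves LCP(M̃, q̃) and ẑ solves LCP(M̂, q̂). Assume z̃ > 0 entrywise and that there exist indices i₀, j₀ with m̂_{i₀j₀} < m̃_{i₀j₀}, or there exists i₀ with q̂_{i₀} < q̃_{i₀}. If M̃ is invertible with all entries of M̃⁻¹ positive, or M̂ is invertible with all entries of M̂⁻¹ positive, then z̃ < ẑ entrywise. -/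
lemma aux_pos {n : ℕ} (A : Matrix (Fin n) (Fin n) ℝ) (hA : IsUnit A)
    (hApos : ∀ i j, 0 < A⁻¹ i j) (x : Fin n → ℝ)
    (hv : ∀ i, 0 ≤ A.mulVec x i) (k : Fin n) (hk : 0 < A.mulVec x k) :
    ∀ i, 0 < x i := by
  intro i
  have hdet := (Matrix.isUnit_iff_isUnit_det A).mp hA
  have hx : x = A⁻¹.mulVec (A.mulVec x) := by
    rw [Matrix.mulVec_mulVec, Matrix.nonsing_inv_mul A hdet, Matrix.one_mulVec]
  rw [hx]
  show 0 < ∑ j, A⁻¹ i j * A.mulVec x j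
  exact Finset.sum_pos' (fun j _ => mul_nonneg (hApos i j).le (hv j))
    ⟨k, Finset.mem_univ k, mul_pos (hApos i k) hk⟩

lemma aux_inj {n : ℕ} (A : Matrix (Fin n) (Fin n) ℝ) (hA : IsUnit A)
    (x : Fin n → ℝ) (hv : A.mulVec x = 0) : x = 0 := by
  have hdet := (Matrix.isUnit_iff_isUnit_det A).mp hA
  have hx : x = A⁻¹.mulVec (A.mulVec x) := by
    rw [Matrix.mulVec_mulVec, Matrix.nonsing_inv_mul A hdet, Matrix.one_mulVec]
  rw [hx, hv, Matrix.mulVec_zero]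

theorem stmt1 {n : ℕ} (Mhat Mtil : Matrix (Fin n) (Fin n) ℝ) (qhat qtil zhat ztil : Fin n → ℝ)
    (hM : ∀ i j, Mhat i j ≤ Mtil i j) (hq : ∀ i, qhat i ≤ qtil i)
    (hZtil : SolvesLCP Mtil qtil ztil) (hZhat : SolvesLCP Mhat qhat zhat)
    (hpos : ∀ i, 0 < ztil i)
    (hstrict : (∃ i₀ j₀, Mhat i₀ j₀ < Mtil i₀ j₀) ∨ (∃ i₀, qhat i₀ < qtil i₀))
    (hinv : (IsUnit Mtil ∧ ∀ i j, 0 < Mtil⁻¹ i j) ∨ (IsUnit Mhat ∧ ∀ i j, 0 < Mhat⁻¹ i j)) :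
    ∀ i, ztil i < zhat i := by
  obtain ⟨hwt, hzt, hst⟩ := hZtil
  obtain ⟨hwh, hzh, hsh⟩ := hZhat
  -- complementarity for ztil: qtil + Mtil ztil = 0
  have hcomp : ∀ i, qtil i + Mtil.mulVec ztil i = 0 := by
    intro i
    have hall := (Finset.sum_eq_zero_iff_of_nonneg
      (fun j _ => mul_nonneg (hwt j) (hzt j))).mp hst i (Finset.mem_univ i)
    exact (mul_eq_zero.mp hall).resolve_right (ne_of_gt (hpos i))
  set x : Fin n → ℝ := zhat - ztil with hxdef
  suffices h : ∀ i, 0 < x i by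
    intro i
    have := h i
    simp only [hxdef, Pi.sub_apply] at this
    linarith
  -- generic decomposition lemma, used for both cases
  rcases hinv with ⟨hU, hP⟩ | ⟨hU, hP⟩
  · -- Mtil invertible case : v = Mtil.mulVec x
    have hvdecomp : ∀ i, Mtil.mulVec x i =
        (qtil i - qhat i) + (∑ j, (Mtil i j - Mhat i j) * zhat j)
          + (qhat i + Mhat.mulVec zhat i) := by
      intro i
      have h1 : Mtil.mulVec x i = Mtil.mulVec zhat i - Mtil.mulVec ztil i := by
        rw [hxdef, Matrix.mulVec_sub]; rfl
      have h2 : ∑ j, (Mtil i j - Mhat i j) * zhat j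
          = Mtil.mulVec zhat i - Mhat.mulVec zhat i := by
        simp [Matrix.mulVec, dotProduct, sub_mul, Finset.sum_sub_distrib]
      have h3 := hcomp i
      rw [h1, h2]; linarith
    have hvnn : ∀ i, 0 ≤ Mtil.mulVec x i := by
      intro i
      rw [hvdecomp i]
      have : 0 ≤ ∑ j, (Mtil i j - Mhat i j) * zhat j :=
        Finset.sum_nonneg fun j _ => mul_nonneg (by linarith [hM i j]) (hzh j)
      have := hwh i
      have := hq i
      linarith
    by_cases hex : ∃ k, 0 < Mtil.mulVec x k
    · obtain ⟨k, hk⟩ := hex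
      exact aux_pos Mtil hU hP x hvnn k hk
    · exfalso
      push_neg at hex
      have hv0 : Mtil.mulVec x = 0 := by
        funext k; exact le_antisymm (hex k) (hvnn k)
      have hx0 : x = 0 := aux_inj Mtil hU x hv0
      have hzz : zhat = ztil := by
        funext k
        have : zhat k - ztil k = 0 := congrFun hx0 k
        linarith
      -- derive strict positivity at i₀, contradicting v = 0
      rcases hstrict with ⟨i₀, j₀, hlt⟩ | ⟨i₀, hlt⟩
      · have hterm : 0 < ∑ j, (Mtil i₀ j - Mhat i₀ j) * zhat j := by
          apply Finset.sum_pos'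
            (fun j _ => mul_nonneg (by linarith [hM i₀ j]) (hzh j))
          refine ⟨j₀, Finset.mem_univ j₀, mul_pos (by linarith) ?_⟩
          rw [hzz]; exact hpos j₀
        have h0 : Mtil.mulVec x i₀ = 0 := congrFun hv0 i₀
        rw [hvdecomp i₀] at h0
        have := hwh i₀
        have := hq i₀
        linarith
      · have h0 : Mtil.mulVec x i₀ = 0 := congrFun hv0 i₀
        rw [hvdecomp i₀] at h0
        have : 0 ≤ ∑ j, (Mtil i₀ j - Mhat i₀ j) * zhat j :=
          Finset.sum_nonneg fun j _ => mul_nonneg (by linarith [hM i₀ j]) (hzh j)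
        have := hwh i₀
        linarith
  · -- Mhat invertible case : u = Mhat.mulVec x
    have hvdecomp : ∀ i, Mhat.mulVec x i =
        (qtil i - qhat i) + (∑ j, (Mtil i j - Mhat i j) * ztil j)
          + (qhat i + Mhat.mulVec zhat i) := by
      intro i
      have h1 : Mhat.mulVec x i = Mhat.mulVec zhat i - Mhat.mulVec ztil i := by
        rw [hxdef, Matrix.mulVec_sub]; rfl
      have h2 : ∑ j, (Mtil i j - Mhat i j) * ztil j
          = Mtil.mulVec ztil i - Mhat.mulVec ztil i := by
        simp [Matrix.mulVec, dotProduct, sub_mul, Finset.sum_sub_distrib]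
      have h3 := hcomp i
      rw [h1, h2]; linarith
    have hvnn : ∀ i, 0 ≤ Mhat.mulVec x i := by
      intro i
      rw [hvdecomp i]
      have : 0 ≤ ∑ j, (Mtil i j - Mhat i j) * ztil j :=
        Finset.sum_nonneg fun j _ => mul_nonneg (by linarith [hM i j]) (hpos j).le
      have := hwh i
      have := hq i
      linarith
    have hex : ∃ k, 0 < Mhat.mulVec x k := by
      rcases hstrict with ⟨i₀, j₀, hlt⟩ | ⟨i₀, hlt⟩
      · refine ⟨i₀, ?_⟩
        rw [hvdecomp i₀]
        have hterm : 0 < ∑ j, (Mtil i₀ j - Mhat i₀ j) * ztil j :=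
          Finset.sum_pos'
            (fun j _ => mul_nonneg (by linarith [hM i₀ j]) (hpos j).le)
            ⟨j₀, Finset.mem_univ j₀, mul_pos (by linarith) (hpos j₀)⟩
        have := hwh i₀
        have := hq i₀
        linarith
      · refine ⟨i₀, ?_⟩
        rw [hvdecomp i₀]
        have : 0 ≤ ∑ j, (Mtil i₀ j - Mhat i₀ j) * ztil j :=
          Finset.sum_nonneg fun j _ => mul_nonneg (by linarith [hM i₀ j]) (hpos j).le
        have := hwh i₀
        linarith
    obtain ⟨k, hk⟩ := hex
    exact aux_pos Mhat hU hP x hvnn k hk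
end

section
/- Let M and A be n×n real matrices, both with nonpositive off-diagonal entries, satisfying M ≤ A entrywise. If M is an M-matrix, then A is an M-matrix, and moreover A⁻¹ ≤ M⁻¹ entrywise. -/
open scoped Matrix


theorem stmt3 {n : ℕ} (M A : Matrix (Fin n) (Fin n) ℝ)
    (hMZ : ∀ i j, i ≠ j → M i j ≤ 0) (hAZ : ∀ i j, i ≠ j → A i j ≤ 0)
    (hle : ∀ i j, M i j ≤ A i j) (hMM : IsMMatrix M) :
    IsMMatrix A ∧ ∀ i j, A⁻¹ i j ≤ M⁻¹ i j := by
  obtain ⟨-, hMunit, hMinv⟩ := hMM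
  rcases Nat.eq_zero_or_pos n with hn | hn
  · subst hn
    exact ⟨⟨fun i => i.elim0, isUnit_of_subsingleton A, fun i => i.elim0⟩, fun i => i.elim0⟩
  have hMdet : IsUnit M.det := (Matrix.isUnit_iff_isUnit_det M).mp hMunit
  have hMinvmul : M⁻¹ * M = 1 := Matrix.nonsing_inv_mul M hMdet
  have hMmulinv : M * M⁻¹ = 1 := Matrix.mul_nonsing_inv M hMdet
  set x : Fin n → ℝ := M⁻¹ *ᵥ (fun _ => 1) with hxdef
  have hMx : M *ᵥ x = fun _ => 1 := by
    rw [hxdef, Matrix.mulVec_mulVec, hMmulinv, Matrix.one_mulVec]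
  have hxi : ∀ i, x i = ∑ j, M⁻¹ i j := by
    intro i
    simp [hxdef, Matrix.mulVec, dotProduct]
  have hxpos : ∀ i, 0 < x i := by
    intro i
    rcases lt_or_eq_of_le (Finset.sum_nonneg (fun j _ => hMinv i j)) with h | h
    · rw [hxi]; exact h
    · exfalso
      have hz : ∀ j ∈ Finset.univ, M⁻¹ i j = 0 := by
        rw [← Finset.sum_eq_zero_iff_of_nonneg (fun j _ => hMinv i j)]
        exact h.symm
      have h1 : (M⁻¹ * M) i i = 1 := by rw [hMinvmul]; simp
      rw [Matrix.mul_apply] at h1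
      rw [Finset.sum_eq_zero (fun j hj => by rw [hz j hj, zero_mul])] at h1
      exact zero_ne_one h1
  have hAx : ∀ i, 0 < (A *ᵥ x) i := by
    intro i
    have h1 : (M *ᵥ x) i = 1 := by rw [hMx]
    have h2 : (M *ᵥ x) i ≤ (A *ᵥ x) i := by
      simp only [Matrix.mulVec, dotProduct]
      exact Finset.sum_le_sum fun j _ =>
        mul_le_mul_of_nonneg_right (hle i j) (hxpos j).le
    linarith
  -- key maximum-principle lemma
  have key : ∀ y : Fin n → ℝ, (∀ i, 0 ≤ (A *ᵥ y) i) → ∀ i, 0 ≤ y i := by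
    intro y hy
    have : Nonempty (Fin n) := ⟨⟨0, hn⟩⟩
    obtain ⟨i0, -, hmin⟩ := Finset.exists_min_image Finset.univ (fun i => y i / x i)
      Finset.univ_nonempty
    set c := y i0 / x i0 with hc
    have hyc : ∀ j, c * x j ≤ y j := by
      intro j
      have h := hmin j (Finset.mem_univ j)
      calc c * x j ≤ (y j / x j) * x j := by
            exact mul_le_mul_of_nonneg_right h (hxpos j).le
        _ = y j := div_mul_cancel₀ _ (hxpos j).ne'
    have hyi0 : y i0 = c * x i0 := by
      rw [hc, div_mul_cancel₀ _ (hxpos i0).ne']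
    by_cases hcn : 0 ≤ c
    · intro i
      have := hyc i
      nlinarith [hxpos i]
    · exfalso
      push_neg at hcn
      have h1 : (A *ᵥ y) i0 ≤ c * (A *ᵥ x) i0 := by
        simp only [Matrix.mulVec, dotProduct]
        rw [Finset.mul_sum]
        apply Finset.sum_le_sum
        intro j _
        by_cases hj : j = i0
        · subst hj; rw [hyi0]; ring_nf; exact le_rfl
        · have hA := hAZ i0 j (Ne.symm hj)
          nlinarith [hyc j]
      have h2 := hAx i0
      nlinarith [hy i0]
  -- A is invertible
  have hAdet : A.det ≠ 0 := by
    intro hdet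
    obtain ⟨v, hv0, hAv⟩ := (Matrix.exists_mulVec_eq_zero_iff).mpr hdet
    have h1 : ∀ i, 0 ≤ v i := key v (fun i => by rw [hAv]; simp)
    have h2 : ∀ i, 0 ≤ (-v) i := key (-v) (fun i => by
      rw [Matrix.mulVec_neg, hAv]; simp)
    apply hv0
    funext i
    show v i = (0 : ℝ)
    have := h2 i
    simp only [Pi.neg_apply] at this
    linarith [h1 i]
  have hAunit : IsUnit A := (Matrix.isUnit_iff_isUnit_det A).mpr (isUnit_iff_ne_zero.mpr hAdet)
  have hAdet' : IsUnit A.det := isUnit_iff_ne_zero.mpr hAdet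
  have hAmulinv : A * A⁻¹ = 1 := Matrix.mul_nonsing_inv A hAdet'
  have hAinvnn : ∀ i j, 0 ≤ A⁻¹ i j := by
    intro i j
    refine key (fun k => A⁻¹ k j) (fun k => ?_) i
    have heq : (A *ᵥ fun k => A⁻¹ k j) k = (A * A⁻¹) k j := by
      simp [Matrix.mulVec, Matrix.mul_apply, dotProduct]
    rw [heq, hAmulinv]
    by_cases h : k = j <;> simp [Matrix.one_apply, h]
  refine ⟨⟨hAZ, hAunit, hAinvnn⟩, ?_⟩
  have hdiff : M⁻¹ * (A - M) * A⁻¹ = M⁻¹ - A⁻¹ := by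
    rw [Matrix.mul_sub, Matrix.sub_mul, Matrix.mul_assoc, hAmulinv, Matrix.mul_one,
      hMinvmul, Matrix.one_mul]
  intro i j
  have hnn : 0 ≤ (M⁻¹ * (A - M) * A⁻¹) i j := by
    rw [Matrix.mul_apply]
    apply Finset.sum_nonneg
    intro k _
    apply mul_nonneg _ (hAinvnn k j)
    rw [Matrix.mul_apply]
    apply Finset.sum_nonneg
    intro l _
    apply mul_nonneg (hMinv i l)
    simp only [Matrix.sub_apply]
    linarith [hle l k]
  rw [hdiff] at hnn
  simp only [Matrix.sub_apply] at hnn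
  linarith
end

section
/- An n×n real matrix M is a P-matrix if and only if for every q ∈ ℝⁿ the linear complementarity problem LCP(M, q) has exactly one solution. -/
/-- A P-matrix: all principal minors (over nonempty index subsets) are positive. -/
def IsPMatrix {n : ℕ} (M : Matrix (Fin n) (Fin n) ℝ) : Prop :=
  ∀ s : Finset (Fin n), s.Nonempty →
    0 < (M.submatrix (fun i : s => (i : Fin n)) (fun j : s => (j : Fin n))).det

open Matrix Finset Filter Topology

namespace LCPAux

variable {n m k : ℕ}

lemma prod_eq_zero {M : Matrix (Fin n) (Fin n) ℝ} {q z : Fin n → ℝ}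
    (h : SolvesLCP M q z) (i : Fin n) : (q i + M.mulVec z i) * z i = 0 := by
  obtain ⟨hw, hz, hsum⟩ := h
  exact (Finset.sum_eq_zero_iff_of_nonneg
    (fun j _ => mul_nonneg (hw j) (hz j))).mp hsum i (Finset.mem_univ i)

lemma isP_submatrix {M : Matrix (Fin n) (Fin n) ℝ} (hM : IsPMatrix M)
    (f : Fin m → Fin n) (hf : Function.Injective f) : IsPMatrix (M.submatrix f f) := by
  intro t ht
  have hbij : Function.Bijective (fun a : t => (⟨f a, Finset.mem_image_of_mem f a.2⟩ :
      (t.image f : Finset (Fin n)))) := by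
    constructor
    · intro a b hab
      exact Subtype.ext (hf (congrArg Subtype.val hab))
    · rintro ⟨b, hb⟩
      obtain ⟨a, ha, rfl⟩ := Finset.mem_image.mp hb
      exact ⟨⟨a, ha⟩, rfl⟩
  set e := Equiv.ofBijective _ hbij
  have key : (M.submatrix f f).submatrix (fun i : t => (i : Fin m)) (fun j : t => (j : Fin m))
      = (M.submatrix (fun i : (t.image f) => (i : Fin n))
          (fun j : (t.image f) => (j : Fin n))).submatrix e e := by
    ext a b
    rfl
  rw [key, Matrix.det_submatrix_equiv_self]
  exact hM (t.image f) (ht.image f)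

lemma diag_submatrix (d : Fin n → ℝ) (f : Fin m → Fin n) (hf : Function.Injective f) :
    (Matrix.diagonal d).submatrix f f = Matrix.diagonal (d ∘ f) := by
  ext a b
  by_cases h : a = b
  · subst h; simp
  · have : f a ≠ f b := fun hc => h (hf hc)
    simp [Matrix.diagonal_apply_ne _ this, Matrix.diagonal_apply_ne _ h]

lemma det_pos_of_isP {M : Matrix (Fin (m+1)) (Fin (m+1)) ℝ} (hM : IsPMatrix M) :
    0 < M.det := by
  have h := hM Finset.univ ⟨0, Finset.mem_univ 0⟩
  let e : ((Finset.univ : Finset (Fin (m+1))) : Type) ≃ Fin (m+1) :=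
    Equiv.subtypeUnivEquiv (fun x => Finset.mem_univ x)
  have key : (M.submatrix (fun i : (Finset.univ : Finset (Fin (m+1))) => (i : Fin (m+1)))
      (fun j : (Finset.univ : Finset (Fin (m+1))) => (j : Fin (m+1)))) = M.submatrix e e := by
    ext a b; simp [e, Equiv.subtypeUnivEquiv]
  rwa [key, Matrix.det_submatrix_equiv_self] at h


variable {ι : Type*} [Fintype ι]

lemma det_one_row (B : Matrix (Fin (m+1)) (Fin (m+1)) ℝ) (i : Fin (m+1)) :
    (B.updateRow i (Pi.single i 1)).det = (B.submatrix i.succAbove i.succAbove).det := by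
  rw [Matrix.det_succ_row _ i]
  rw [Finset.sum_eq_single i]
  · simp only [Matrix.updateRow_self, Pi.single_eq_same]
    have h1 : ((-1 : ℝ)) ^ ((i : ℕ) + (i : ℕ)) = 1 := Even.neg_one_pow ⟨i, rfl⟩
    have h2 : (B.updateRow i (Pi.single i 1)).submatrix i.succAbove i.succAbove
        = B.submatrix i.succAbove i.succAbove := by
      ext a b
      simp [Matrix.updateRow_ne (Fin.succAbove_ne i a)]
    rw [h1, h2]; ring
  · intro j _ hj
    simp [Matrix.updateRow_self, Pi.single_eq_of_ne hj]
  · intro h; exact absurd (Finset.mem_univ i) h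

lemma det_add_diagonal_pos : ∀ m (A : Matrix (Fin m) (Fin m) ℝ), IsPMatrix A →
    ∀ d : Fin m → ℝ, (∀ i, 0 ≤ d i) → 0 < (A + Matrix.diagonal d).det := by
  intro m
  induction m with
  | zero =>
    intro A _ d _
    simp [Matrix.det_fin_zero]
  | succ m ih =>
    intro A hA d hd
    suffices H : ∀ c (d : Fin (m+1) → ℝ), (Finset.univ.filter (fun i => d i ≠ 0)).card = c →
        (∀ i, 0 ≤ d i) → 0 < (A + Matrix.diagonal d).det by
      exact H _ d rfl hd
    intro c
    induction c with
    | zero =>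
      intro d hc hd0
      have hz : ∀ i, d i = 0 := by
        intro i
        by_contra hne
        have : i ∈ Finset.univ.filter (fun i => d i ≠ 0) := by simp [hne]
        rw [Finset.card_eq_zero.mp hc] at this
        exact absurd this (Finset.notMem_empty i)
      have hdz : Matrix.diagonal d = 0 := by
        rw [funext hz]
        exact Matrix.diagonal_zero
      rw [hdz, add_zero]
      exact det_pos_of_isP hA
    | succ c ihc =>
      intro d hc hd0
      have hne : (Finset.univ.filter (fun i => d i ≠ 0)).Nonempty := by
        rw [← Finset.card_pos, hc]; omega
      obtain ⟨i, hi⟩ := hne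
      have hdi : d i ≠ 0 := by simpa using hi
      set d' : Fin (m+1) → ℝ := Function.update d i 0 with hd'
      set B : Matrix (Fin (m+1)) (Fin (m+1)) ℝ := A + Matrix.diagonal d' with hB
      have hcard : (Finset.univ.filter (fun j => d' j ≠ 0)).card = c := by
        have : Finset.univ.filter (fun j => d' j ≠ 0)
            = (Finset.univ.filter (fun j => d j ≠ 0)).erase i := by
          ext j
          by_cases hj : j = i
          · subst hj; simp [hd', Function.update_self]
          · simp [hd', Function.update_of_ne hj, hj]
        rw [this, Finset.card_erase_of_mem hi, hc]
        omega
      have hd0' : ∀ j, 0 ≤ d' j := by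
        intro j
        by_cases hj : j = i
        · subst hj; simp [hd', Function.update_self]
        · simpa [hd', Function.update_of_ne hj] using hd0 j
      have hBpos : 0 < B.det := ihc d' hcard hd0'
      have hrow : A + Matrix.diagonal d = B.updateRow i (B i + d i • (Pi.single i 1 : Fin (m+1) → ℝ)) := by
        ext j l
        by_cases hj : j = i
        · subst hj
        
          by_cases hl : j = l
          · subst hl
            simp [hB, hd', Matrix.updateRow_self, Matrix.diagonal_apply_eq,
              Function.update_self, Pi.single_eq_same]
          · simp [hB, hd', Matrix.updateRow_self, Matrix.diagonal_apply_ne _ hl,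
              Pi.single_eq_of_ne (Ne.symm hl)]
        · simp only [Matrix.updateRow_ne hj, hB, Matrix.add_apply]
          by_cases hl : j = l
          · subst hl
            simp [hd', Function.update_of_ne hj]
          · simp [Matrix.diagonal_apply_ne _ hl]
      rw [hrow, Matrix.det_updateRow_add, Matrix.updateRow_eq_self, Matrix.det_updateRow_smul,
        det_one_row]
      have hsub : B.submatrix i.succAbove i.succAbove
          = A.submatrix i.succAbove i.succAbove + Matrix.diagonal (d' ∘ i.succAbove) := by
        ext a b
        have h2 : Matrix.diagonal d' (i.succAbove a) (i.succAbove b)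
            = Matrix.diagonal (d' ∘ i.succAbove) a b := by
          rw [← diag_submatrix d' i.succAbove Fin.succAbove_right_injective]
          rfl
        simp [hB, Matrix.submatrix_apply, Matrix.add_apply, h2]
      have hsubP : IsPMatrix (A.submatrix i.succAbove i.succAbove) :=
        isP_submatrix hA _ (Fin.succAbove_right_injective)
      have hminor : 0 < (B.submatrix i.succAbove i.succAbove).det := by
        rw [hsub]
        exact ih _ hsubP _ (fun j => hd0' _)
      have hdipos : 0 < d i := lt_of_le_of_ne (hd0 i) (Ne.symm hdi)
      have := mul_pos hdipos hminor
      linarith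

lemma mulVec_support_subset {M : Matrix (Fin n) (Fin n) ℝ} {g : ι → Fin n}
    (hg : Function.Injective g) {x : Fin n → ℝ} (hx : ∀ i, (∀ j, g j ≠ i) → x i = 0)
    (i : Fin n) : M.mulVec x i = ∑ j, M i (g j) * x (g j) := by
  have h1 : ∑ j' ∈ Finset.univ.image g, M i j' * x j' = ∑ j, M i (g j) * x (g j) :=
    Finset.sum_image (fun a _ b _ h => hg h)
  rw [Matrix.mulVec, dotProduct, ← h1]
  symm
  apply Finset.sum_subset (Finset.subset_univ _)
  intro i' _ hi'
  have : ∀ j, g j ≠ i' := by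
    intro j hj
    exact hi' (Finset.mem_image.mpr ⟨j, Finset.mem_univ j, hj⟩)
  rw [hx i' this, mul_zero]

lemma exists_pos_of_ne_zero {M : Matrix (Fin n) (Fin n) ℝ} (hM : IsPMatrix M)
    {x : Fin n → ℝ} (hx : x ≠ 0) : ∃ i, 0 < x i * M.mulVec x i := by
  by_contra hcon
  push_neg at hcon
  classical
  set s : Finset (Fin n) := Finset.univ.filter (fun i => x i ≠ 0) with hs
  obtain ⟨i0, hi0⟩ : ∃ i, x i ≠ 0 := by
    by_contra h
    push_neg at h
    exact hx (funext h)
  have hi0s : i0 ∈ s := by simp [hs, hi0]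
  set e := Fintype.equivFin s with he
  set k := Fintype.card s
  set g : Fin k → Fin n := fun j => ((e.symm j : s) : Fin n) with hgdef
  have hg : Function.Injective g := fun a b hab =>
    e.symm.injective (Subtype.ext hab)
  have hrange : ∀ i, i ∈ s → ∃ j, g j = i := by
    intro i hi
    exact ⟨e ⟨i, hi⟩, by simp [hgdef]⟩
  have hsupp : ∀ i, (∀ j, g j ≠ i) → x i = 0 := by
    intro i hno
    by_contra hxi
    obtain ⟨j, hj⟩ := hrange i (by simp [hs, hxi])
    exact hno j hj
  set A := M.submatrix g g with hA
  have hAP : IsPMatrix A := isP_submatrix hM g hg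
  set y : Fin k → ℝ := fun j => x (g j) with hy
  have hyne : ∀ j, y j ≠ 0 := by
    intro j
    have : g j ∈ s := (e.symm j).2
    simpa [hs, hy] using (Finset.mem_filter.mp this).2
  have hAy : ∀ j, A.mulVec y j = M.mulVec x (g j) := by
    intro j
    rw [mulVec_support_subset hg hsupp (g j)]
    simp [hA, hy, Matrix.mulVec, dotProduct]
  set d : Fin k → ℝ := fun j => -(A.mulVec y j) / y j with hd
  have hd0 : ∀ j, 0 ≤ d j := by
    intro j
    have hprod : y j * A.mulVec y j ≤ 0 := by
      rw [hAy j]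
      exact hcon (g j)
    rcases lt_or_gt_of_ne (hyne j) with hneg | hpos
    · have : 0 ≤ A.mulVec y j := nonneg_of_mul_nonpos_right hprod hneg
      exact div_nonneg_iff.mpr (Or.inr ⟨by linarith, le_of_lt hneg⟩)
    · have : A.mulVec y j ≤ 0 := nonpos_of_mul_nonpos_right hprod hpos
      exact div_nonneg (by linarith) (le_of_lt hpos)
  have hker : (A + Matrix.diagonal d).mulVec y = 0 := by
    funext j
    rw [Matrix.add_mulVec, Pi.add_apply, Matrix.mulVec_diagonal]
    have : d j * y j = -(A.mulVec y j) := by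
      show (-(A.mulVec y j) / y j) * y j = -(A.mulVec y j)
      exact div_mul_cancel₀ _ (hyne j)
    rw [this]
    simp
  have hdet : (A + Matrix.diagonal d).det = 0 := by
    rw [← Matrix.exists_mulVec_eq_zero_iff]
    refine ⟨y, ?_, hker⟩
    intro h0
    exact hyne (e ⟨i0, hi0s⟩) (by rw [h0]; rfl)
  exact absurd hdet (ne_of_gt (det_add_diagonal_pos k A hAP d hd0))

lemma unique_sol {M : Matrix (Fin n) (Fin n) ℝ} (hM : IsPMatrix M) {q z1 z2 : Fin n → ℝ}
    (h1 : SolvesLCP M q z1) (h2 : SolvesLCP M q z2) : z1 = z2 := by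
  by_contra hne
  have hx : z1 - z2 ≠ 0 := sub_ne_zero.mpr hne
  obtain ⟨i, hi⟩ := exists_pos_of_ne_zero hM hx
  have hmv : M.mulVec (z1 - z2) = M.mulVec z1 - M.mulVec z2 := Matrix.mulVec_sub M z1 z2
  rw [hmv] at hi
  have e1 := prod_eq_zero h1 i
  have e2 := prod_eq_zero h2 i
  have w1 := h1.1 i
  have w2 := h2.1 i
  have hz1 := h1.2.1 i
  have hz2 := h2.2.1 i
  simp only [Pi.sub_apply] at hi
  nlinarith [mul_nonneg w1 hz2, mul_nonneg w2 hz1]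

lemma sol_bound {M : Matrix (Fin n) (Fin n) ℝ} (hM : IsPMatrix M) :
    ∃ C : ℝ, 0 ≤ C ∧ ∀ q z, SolvesLCP M q z → ‖z‖ ≤ C * ‖q‖ := by
  classical
  set N : Finset (Fin n) → Matrix (Fin n) (Fin n) ℝ := fun α =>
    Matrix.of (fun i j => if h : i ∈ α ∧ j ∈ α then
      ((M.submatrix (fun a : α => (a : Fin n)) (fun b : α => (b : Fin n)))⁻¹) ⟨i, h.1⟩ ⟨j, h.2⟩
      else 0) with hN
  set K : Finset (Fin n) → ℝ := fun α => ∑ i, ∑ j, |N α i j| with hK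
  have hKnn : ∀ α, 0 ≤ K α :=
    fun α => Finset.sum_nonneg fun i _ => Finset.sum_nonneg fun j _ => abs_nonneg _
  refine ⟨∑ α : Finset (Fin n), K α, Finset.sum_nonneg fun α _ => hKnn α, ?_⟩
  intro q z hz
  set α : Finset (Fin n) := Finset.univ.filter (fun i => z i ≠ 0) with hα
  have hzoff : ∀ i, i ∉ α → z i = 0 := by
    intro i hi
    by_contra h
    exact hi (by simp [hα, h])
  have key : ∀ i, z i = ∑ j, N α i j * (-(q j)) := by
    intro i
    by_cases hiα : i ∈ α
    · -- the principal submatrix is invertible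
      set A := M.submatrix (fun a : α => (a : Fin n)) (fun b : α => (b : Fin n)) with hA
      have hdet : IsUnit A.det := isUnit_iff_ne_zero.mpr (ne_of_gt (hM α ⟨i, hiα⟩))
      have hgInj : Function.Injective (fun a : α => (a : Fin n)) := Subtype.val_injective
      have hsupp : ∀ i', (∀ b : α, (b : Fin n) ≠ i') → z i' = 0 := by
        intro i' hb
        apply hzoff
        intro hmem
        exact hb ⟨i', hmem⟩ rfl
      have hAz : A.mulVec (fun a : α => z a) = fun a : α => -(q a) := by
        funext a
        have h1 : A.mulVec (fun b : α => z b) a = M.mulVec z a := by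
          rw [mulVec_support_subset hgInj hsupp (a : Fin n)]
          simp [hA, Matrix.mulVec, dotProduct]
        rw [h1]
        have hza : 0 < z a := lt_of_le_of_ne (hz.2.1 a) (Ne.symm ((Finset.mem_filter.mp a.2).2))
        have := prod_eq_zero hz a
        have hwa : q (a : Fin n) + M.mulVec z a = 0 := by
          rcases mul_eq_zero.mp this with h | h
          · exact h
          · exact absurd h (ne_of_gt hza)
        linarith
      have hzα : (fun a : α => z a) = A⁻¹.mulVec (fun a : α => -(q a)) := by
        rw [← hAz, Matrix.mulVec_mulVec, Matrix.nonsing_inv_mul A hdet, Matrix.one_mulVec]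
      have hzi : z i = ∑ b : α, A⁻¹ ⟨i, hiα⟩ b * (-(q b)) := by
        have := congrFun hzα ⟨i, hiα⟩
        simpa [Matrix.mulVec, dotProduct] using this
      rw [hzi]
      have hR : ∑ j : Fin n, N α i j * (-(q j)) = ∑ j ∈ α, N α i j * (-(q j)) := by
        symm
        apply Finset.sum_subset (Finset.subset_univ _)
        intro j _ hj
        have hNz : N α i j = 0 := by
          rw [hN]; simp only [Matrix.of_apply]; rw [dif_neg]
          exact fun hc => hj hc.2
        rw [hNz, zero_mul]
      rw [hR, ← Finset.sum_attach α (fun j => N α i j * (-(q j)))]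
      apply Finset.sum_congr rfl
      intro b _
      congr 1
      rw [hN]; simp only [Matrix.of_apply]
      rw [dif_pos ⟨hiα, b.2⟩]
    · rw [hzoff i hiα]
      symm
      apply Finset.sum_eq_zero
      intro j _
      have : N α i j = 0 := by
        rw [hN]
        simp only [Matrix.of_apply]
        rw [dif_neg]
        intro hc
        exact hiα hc.1
      rw [this, zero_mul]
  have hbound : ∀ i, |z i| ≤ K α * ‖q‖ := by
    intro i
    rw [key i]
    calc |∑ j, N α i j * (-(q j))| ≤ ∑ j, |N α i j * (-(q j))| := Finset.abs_sum_le_sum_abs _ _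
    _ ≤ ∑ j, |N α i j| * ‖q‖ := by
        apply Finset.sum_le_sum
        intro j _
        rw [abs_mul, abs_neg]
        exact mul_le_mul_of_nonneg_left
          (by simpa [Real.norm_eq_abs] using norm_le_pi_norm q j) (abs_nonneg _)
    _ = (∑ j, |N α i j|) * ‖q‖ := (Finset.sum_mul _ _ _).symm
    _ ≤ K α * ‖q‖ := by
        apply mul_le_mul_of_nonneg_right ?_ (norm_nonneg q)
        exact Finset.single_le_sum (f := fun i => ∑ j, |N α i j|)
          (fun i _ => Finset.sum_nonneg fun j _ => abs_nonneg _) (Finset.mem_univ i)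
  have hzle : ‖z‖ ≤ (K α) * ‖q‖ := by
    apply (pi_norm_le_iff_of_nonneg (mul_nonneg (hKnn α) (norm_nonneg q))).mpr
    intro i
    simpa [Real.norm_eq_abs] using hbound i
  refine le_trans hzle (mul_le_mul_of_nonneg_right ?_ (norm_nonneg q))
  exact Finset.single_le_sum (fun β _ => hKnn β) (Finset.mem_univ α)

lemma tendsto_mulVec {M : Matrix (Fin n) (Fin n) ℝ} {zs : ℕ → Fin n → ℝ} {z : Fin n → ℝ}
    (hz : Tendsto zs atTop (𝓝 z)) (i : Fin n) :
    Tendsto (fun m => M.mulVec (zs m) i) atTop (𝓝 (M.mulVec z i)) := by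
  simp only [Matrix.mulVec, dotProduct]
  apply tendsto_finset_sum
  intro j _
  exact tendsto_const_nhds.mul (((continuous_apply j).tendsto z).comp hz)

lemma solves_of_tendsto {M : Matrix (Fin n) (Fin n) ℝ} {q : Fin n → ℝ}
    {qs zs : ℕ → Fin n → ℝ} {z : Fin n → ℝ}
    (hq : Tendsto qs atTop (𝓝 q)) (hzt : Tendsto zs atTop (𝓝 z))
    (hs : ∀ m, SolvesLCP M (qs m) (zs m)) : SolvesLCP M q z := by
  have hzi : ∀ i, Tendsto (fun m => zs m i) atTop (𝓝 (z i)) :=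
    fun i => ((continuous_apply i).tendsto z).comp hzt
  have hqi : ∀ i, Tendsto (fun m => qs m i) atTop (𝓝 (q i)) :=
    fun i => ((continuous_apply i).tendsto q).comp hq
  have hwi : ∀ i, Tendsto (fun m => qs m i + M.mulVec (zs m) i) atTop
      (𝓝 (q i + M.mulVec z i)) := fun i => (hqi i).add (tendsto_mulVec hzt i)
  refine ⟨fun i => ge_of_tendsto' (hwi i) (fun m => (hs m).1 i),
    fun i => ge_of_tendsto' (hzi i) (fun m => (hs m).2.1 i), ?_⟩
  · have hsum : Tendsto (fun m => ∑ i, (qs m i + M.mulVec (zs m) i) * zs m i) atTop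
        (𝓝 (∑ i, (q i + M.mulVec z i) * z i)) :=
      tendsto_finset_sum _ (fun i _ => (hwi i).mul (hzi i))
    have hzero : (fun m => ∑ i, (qs m i + M.mulVec (zs m) i) * zs m i) = fun _ => (0:ℝ) :=
      funext fun m => (hs m).2.2
    rw [hzero] at hsum
    exact tendsto_nhds_unique hsum tendsto_const_nhds

lemma solves_smul {M : Matrix (Fin n) (Fin n) ℝ} {q z : Fin n → ℝ} {c : ℝ} (hc : 0 ≤ c)
    (h : SolvesLCP M q z) : SolvesLCP M (c • q) (c • z) := by
  have hmv : M.mulVec (c • z) = c • M.mulVec z := by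
    funext i
    simp [Matrix.mulVec, dotProduct, Finset.mul_sum]
    congr 1
    funext j
    ring
  refine ⟨?_, fun i => mul_nonneg hc (h.2.1 i), ?_⟩
  · intro i
    rw [hmv]
    have := h.1 i
    simp only [Pi.smul_apply, smul_eq_mul]
    rw [← mul_add]
    exact mul_nonneg hc this
  · rw [hmv]
    have : ∀ i, ((c • q) i + (c • M.mulVec z) i) * (c • z) i
        = c^2 * ((q i + M.mulVec z i) * z i) := by
      intro i
      simp only [Pi.smul_apply, smul_eq_mul]
      ring
    rw [Finset.sum_congr rfl (fun i _ => this i), ← Finset.mul_sum, h.2.2, mul_zero]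

/-- Continuity of the (choice) solution map. -/
lemma sol_cont {M : Matrix (Fin n) (Fin n) ℝ} (hM : IsPMatrix M)
    (hex : ∀ p, ∃ z, SolvesLCP M p z) :
    Continuous (fun p => (hex p).choose) := by
  set S := fun p => (hex p).choose with hS
  have hSsol : ∀ p, SolvesLCP M p (S p) := fun p => (hex p).choose_spec
  obtain ⟨C, hC0, hCb⟩ := sol_bound hM
  apply SeqContinuous.continuous
  intro ps p hp
  apply Filter.tendsto_of_subseq_tendsto
  intro ns hns
  have hnorm : Tendsto (fun m => ‖ps m‖) atTop (𝓝 ‖p‖) := hp.norm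
  obtain ⟨B, hB⟩ := hnorm.bddAbove_range
  have hBmem : ∀ m, ‖ps m‖ ≤ B := fun m => hB (Set.mem_range_self m)
  have hball : ∀ m, S (ps (ns m)) ∈ Metric.closedBall (0 : Fin n → ℝ) (C * B) := by
    intro m
    rw [Metric.mem_closedBall, dist_zero_right]
    calc ‖S (ps (ns m))‖ ≤ C * ‖ps (ns m)‖ := hCb _ _ (hSsol _)
    _ ≤ C * B := mul_le_mul_of_nonneg_left (hBmem _) hC0
  obtain ⟨a, -, φ, hφ, ha⟩ :=
    tendsto_subseq_of_bounded Metric.isBounded_closedBall hball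
  refine ⟨φ, ?_⟩
  have hqs : Tendsto (fun m => ps (ns (φ m))) atTop (𝓝 p) :=
    hp.comp (hns.comp hφ.tendsto_atTop)
  have hasol : SolvesLCP M p a :=
    solves_of_tendsto hqs ha (fun m => hSsol (ps (ns (φ m))))
  have : a = S p := unique_sol hM hasol (hSsol p)
  rw [← this]
  exact ha

lemma mulVec_snoc (M : Matrix (Fin (n+1)) (Fin (n+1)) ℝ) (z : Fin n → ℝ) (t : ℝ)
    (i : Fin (n+1)) :
    M.mulVec (Fin.snoc z t) i = (∑ j : Fin n, M i j.castSucc * z j) + M i (Fin.last n) * t := by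
  simp [Matrix.mulVec, dotProduct, Fin.sum_univ_castSucc]

theorem lcp_exists : ∀ {n : ℕ} (M : Matrix (Fin n) (Fin n) ℝ), IsPMatrix M →
    ∀ q, ∃ z, SolvesLCP M q z := by
  intro n
  induction n with
  | zero =>
    intro M _ q
    exact ⟨fun _ => 0, fun i => i.elim0, fun i => i.elim0, by simp⟩
  | succ n ih =>
    intro M hM q
    classical
    set Mb := M.submatrix Fin.castSucc Fin.castSucc with hMbdef
    have hMbP : IsPMatrix Mb := isP_submatrix hM _ (Fin.castSucc_injective n)
    have hex : ∀ p, ∃ z, SolvesLCP Mb p z := ih Mb hMbP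
    set S := fun p => (hex p).choose with hSdef
    have hSsol : ∀ p, SolvesLCP Mb p (S p) := fun p => (hex p).choose_spec
    have hSuniq : ∀ p z, SolvesLCP Mb p z → z = S p :=
      fun p z hz => unique_sol hMbP hz (hSsol p)
    have hScont : Continuous S := sol_cont hMbP hex
    set qb : Fin n → ℝ := fun i => q i.castSucc with hqb
    set mb : Fin n → ℝ := fun i => M i.castSucc (Fin.last n) with hmb
    set row : Fin n → ℝ := fun j => M (Fin.last n) j.castSucc with hrow
    set dnn : ℝ := M (Fin.last n) (Fin.last n) with hdnn
    set f : ℝ → ℝ := fun t => q (Fin.last n) + ((∑ j, row j * S (qb + t • mb) j) + dnn * t)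
      with hf
    have hfc : Continuous f := by
      apply continuous_const.add
      apply Continuous.add ?_ (continuous_const.mul continuous_id)
      apply continuous_finset_sum
      intro j _
      exact continuous_const.mul ((continuous_apply j).comp
        (hScont.comp (continuous_const.add (continuous_id.smul continuous_const))))
    -- key computations
    have hkey : ∀ (t : ℝ) (i : Fin n),
        q i.castSucc + M.mulVec (Fin.snoc (S (qb + t • mb)) t) i.castSucc
        = (qb + t • mb) i + Mb.mulVec (S (qb + t • mb)) i := by
      intro t i
      rw [mulVec_snoc]
      simp only [Pi.add_apply, Pi.smul_apply, smul_eq_mul, hqb, hmb, hMbdef]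
      simp only [Matrix.mulVec, dotProduct, Matrix.submatrix_apply]
      ring
    have hkeyl : ∀ t : ℝ,
        q (Fin.last n) + M.mulVec (Fin.snoc (S (qb + t • mb)) t) (Fin.last n) = f t := by
      intro t
      rw [mulVec_snoc, hf]
    -- building a solution from a good `t`
    have build : ∀ t : ℝ, 0 ≤ t → 0 ≤ f t → f t * t = 0 → ∃ z, SolvesLCP M q z := by
      intro t ht hft hprod
      obtain ⟨hw', hz', hsum'⟩ := hSsol (qb + t • mb)
      refine ⟨Fin.snoc (S (qb + t • mb)) t, ?_, ?_, ?_⟩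
      · intro i
        rcases Fin.eq_castSucc_or_eq_last i with ⟨j, rfl⟩ | rfl
        · rw [hkey t j]; exact hw' j
        · rw [hkeyl t]; exact hft
      · intro i
        rcases Fin.eq_castSucc_or_eq_last i with ⟨j, rfl⟩ | rfl
        · rw [Fin.snoc_castSucc]; exact hz' j
        · rw [Fin.snoc_last]; exact ht
      · rw [Fin.sum_univ_castSucc]
        have h1 : ∀ j : Fin n,
            (q (Fin.castSucc j) + M.mulVec (Fin.snoc (S (qb + t • mb)) t) j.castSucc)
              * (Fin.snoc (S (qb + t • mb)) t : Fin (n+1) → ℝ) j.castSucc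
            = ((qb + t • mb) j + Mb.mulVec (S (qb + t • mb)) j) * S (qb + t • mb) j := by
          intro j
          rw [hkey t j, Fin.snoc_castSucc]
        rw [Finset.sum_congr rfl (fun j _ => h1 j)]
        rw [hsum']
        rw [Fin.snoc_last, hkeyl t, hprod]
        ring
    by_cases hf0 : 0 ≤ f 0
    · exact build 0 le_rfl hf0 (mul_zero _)
    · push_neg at hf0
      set ζ := S mb with hζdef
      have hζ := hSsol mb
      have hwinf : 0 < (∑ j, row j * ζ j) + dnn := by
        have hxne : (Fin.snoc ζ 1 : Fin (n+1) → ℝ) ≠ 0 := by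
          intro h0
          have := congrFun h0 (Fin.last n)
          rw [Fin.snoc_last] at this
          exact one_ne_zero this
        obtain ⟨i, hi⟩ := exists_pos_of_ne_zero hM hxne
        rcases Fin.eq_castSucc_or_eq_last i with ⟨j, rfl⟩ | rfl
        · exfalso
          rw [mulVec_snoc] at hi
          have hc : (Fin.snoc ζ 1 : Fin (n+1) → ℝ) j.castSucc = ζ j := Fin.snoc_castSucc ..
          rw [hc] at hi
          have h2 : (∑ j' : Fin n, M j.castSucc j'.castSucc * ζ j') + M j.castSucc (Fin.last n) * 1
              = mb j + Mb.mulVec ζ j := by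
            simp only [hmb, hMbdef, Matrix.mulVec, dotProduct, Matrix.submatrix_apply]
            ring
          rw [h2] at hi
          have := prod_eq_zero hζ j
          nlinarith
        · rw [mulVec_snoc, Fin.snoc_last] at hi
          have h2 : (∑ j' : Fin n, M (Fin.last n) j'.castSucc * ζ j')
              + M (Fin.last n) (Fin.last n) * 1 = (∑ j, row j * ζ j) + dnn := by
            rw [hrow, hdnn]; ring
          rw [h2] at hi
          linarith
      have hscale : ∀ c : ℝ, 0 < c → ∀ p, S (c • p) = c • S p :=
        fun c hc p => (hSuniq _ _ (solves_smul (le_of_lt hc) (hSsol p))).symm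
      set g : ℝ → ℝ := fun t => q (Fin.last n) / t + ((∑ j, row j * S ((1/t) • qb + mb) j) + dnn)
        with hg
      have hglim : Tendsto g atTop (𝓝 (0 + ((∑ j, row j * ζ j) + dnn))) := by
        apply Tendsto.add
        · have h := tendsto_inv_atTop_zero.const_mul (q (Fin.last n))
          rw [mul_zero] at h
          convert h using 1
          funext t
          exact div_eq_mul_inv _ _
        · apply Tendsto.add_const
          have hinner : Tendsto (fun t : ℝ => (1/t) • qb + mb) atTop (𝓝 mb) := by
            have h0 : Tendsto (fun t : ℝ => 1/t) atTop (𝓝 (0:ℝ)) := by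
              simpa using tendsto_inv_atTop_zero
            have h1 : Tendsto (fun t : ℝ => (1/t) • qb) atTop (𝓝 ((0:ℝ) • qb)) :=
              h0.smul_const qb
            have := h1.add_const mb
            simpa using this
          have hcomp : Tendsto (fun t : ℝ => S ((1/t) • qb + mb)) atTop (𝓝 ζ) :=
            (hScont.tendsto mb).comp hinner
          apply tendsto_finset_sum
          intro j _
          exact tendsto_const_nhds.mul (((continuous_apply j).tendsto ζ).comp hcomp)
      have hpos : ∀ᶠ t in atTop, 0 < g t :=
        hglim.eventually (eventually_gt_nhds (by linarith))
      obtain ⟨T, hgT, hT0⟩ := (hpos.and (eventually_gt_atTop (0:ℝ))).exists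
      have hfT : 0 < f T := by
        have hST : S (qb + T • mb) = T • S ((1/T) • qb + mb) := by
          rw [← hscale T hT0]
          congr 1
          rw [smul_add, smul_smul]
          rw [mul_one_div, div_self (ne_of_gt hT0)]
          rw [one_smul]
        have hTne : T ≠ 0 := ne_of_gt hT0
        have hftg : f T = T * g T := by
          show q (Fin.last n) + ((∑ j, row j * S (qb + T • mb) j) + dnn * T)
              = T * (q (Fin.last n) / T + ((∑ j, row j * S ((1/T) • qb + mb) j) + dnn))
          rw [hST]
          simp only [Pi.smul_apply, smul_eq_mul]
          have hsum : (∑ j, row j * (T * S ((1/T) • qb + mb) j))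
              = T * ∑ j, row j * S ((1/T) • qb + mb) j := by
            rw [Finset.mul_sum]
            exact Finset.sum_congr rfl (fun j _ => by ring)
          rw [hsum]
          field_simp
        rw [hftg]
        exact mul_pos hT0 hgT
      have hy := intermediate_value_Icc (le_of_lt hT0) hfc.continuousOn
      obtain ⟨t0, ht0mem, hft0⟩ := hy ⟨le_of_lt hf0, le_of_lt hfT⟩
      exact build t0 ht0mem.1 (le_of_eq hft0.symm) (by rw [hft0, zero_mul])

/-- If some principal minor is nonpositive, there is a nonzero sign-reversed vector. -/
lemma reversal_of_not_p {M : Matrix (Fin n) (Fin n) ℝ} {s : Finset (Fin n)}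
    (hne : s.Nonempty)
    (hdet : (M.submatrix (fun i : s => (i : Fin n)) (fun j : s => (j : Fin n))).det ≤ 0) :
    ∃ x : Fin n → ℝ, x ≠ 0 ∧ ∀ i, x i * M.mulVec x i ≤ 0 := by
  classical
  set e := Fintype.equivFin s with he
  set k := Fintype.card s with hk
  set g : Fin k → Fin n := fun j => ((e.symm j : s) : Fin n) with hgdef
  have hg : Function.Injective g := fun a b hab => e.symm.injective (Subtype.ext hab)
  set A : Matrix (Fin k) (Fin k) ℝ := M.submatrix g g with hA
  have hdetA : A.det ≤ 0 := by
    have hcomp : A = (M.submatrix (fun i : s => (i : Fin n))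
        (fun j : s => (j : Fin n))).submatrix e.symm e.symm := by
      ext a b; rfl
    rw [hcomp, Matrix.det_submatrix_equiv_self]
    exact hdet
  -- find T > 0 with det (A + T • 1) > 0
  set D : ℝ → ℝ := fun c => (c • A + (1 : Matrix (Fin k) (Fin k) ℝ)).det with hD
  have hDcont : Continuous D := by
    apply Continuous.matrix_det
    exact (continuous_id.smul continuous_const).add continuous_const
  have hD0 : D 0 = 1 := by
    rw [hD]
    simp
  have h0t : Tendsto (fun t : ℝ => 1/t) atTop (𝓝 (0:ℝ)) := by
    simpa using tendsto_inv_atTop_zero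
  have hDlim : Tendsto (fun t : ℝ => D (1/t)) atTop (𝓝 1) := by
    have := (hDcont.tendsto 0).comp h0t
    rwa [hD0] at this
  have hDev : ∀ᶠ t in atTop, 0 < D (1/t) :=
    hDlim.eventually (eventually_gt_nhds one_pos)
  obtain ⟨T, hDT, hT0⟩ := (hDev.and (eventually_gt_atTop (0:ℝ))).exists
  have hdetT : 0 < (A + T • (1 : Matrix (Fin k) (Fin k) ℝ)).det := by
    have hfact : A + T • (1 : Matrix (Fin k) (Fin k) ℝ)
        = T • ((1/T) • A + (1 : Matrix (Fin k) (Fin k) ℝ)) := by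
      rw [smul_add, smul_smul, mul_one_div, div_self (ne_of_gt hT0), one_smul]
    rw [hfact, Matrix.det_smul]
    exact mul_pos (pow_pos hT0 _) hDT
  -- IVT: some t0 in [0, T] with det (A + t0 • 1) = 0
  have hcont : ContinuousOn (fun t : ℝ => (A + t • (1 : Matrix (Fin k) (Fin k) ℝ)).det)
      (Set.Icc 0 T) := by
    apply Continuous.continuousOn
    apply Continuous.matrix_det
    exact continuous_const.add (continuous_id.smul continuous_const)
  have hivt := intermediate_value_Icc (le_of_lt hT0) hcont
  have h0mem : (0:ℝ) ∈ Set.Icc ((A + (0:ℝ) • (1 : Matrix (Fin k) (Fin k) ℝ)).det)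
      ((A + T • (1 : Matrix (Fin k) (Fin k) ℝ)).det) := by
    constructor
    · simpa using hdetA
    · exact le_of_lt hdetT
  obtain ⟨t0, ht0mem, ht0⟩ := hivt h0mem
  -- kernel vector
  obtain ⟨y, hyne, hy⟩ := (Matrix.exists_mulVec_eq_zero_iff).mpr ht0
  -- extend by zero
  set x : Fin n → ℝ := fun i => if h : i ∈ s then y (e ⟨i, h⟩) else 0 with hx
  have hxg : ∀ j, x (g j) = y j := by
    intro j
    have hmem : (g j) ∈ s := (e.symm j).2
    show (if h : g j ∈ s then y (e ⟨g j, h⟩) else 0) = y j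
    rw [dif_pos hmem]
    have heq : (⟨g j, hmem⟩ : {a // a ∈ s}) = e.symm j := Subtype.ext rfl
    rw [heq, Equiv.apply_symm_apply]
  have hsupp : ∀ i, (∀ j, g j ≠ i) → x i = 0 := by
    intro i hno
    show (if h : i ∈ s then y (e ⟨i, h⟩) else 0) = 0
    rw [dif_neg]
    intro hmem
    refine hno (e ⟨i, hmem⟩) ?_
    show ((e.symm (e ⟨i, hmem⟩) : s) : Fin n) = i
    rw [Equiv.symm_apply_apply]
  have hxne : x ≠ 0 := by
    intro h0
    apply hyne
    funext j
    have := congrFun h0 (g j)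
    rw [hxg j] at this
    exact this
  have hMx : ∀ j, M.mulVec x (g j) = -t0 * y j := by
    intro j
    rw [mulVec_support_subset hg hsupp (g j)]
    have h1 : ∑ j', M (g j) (g j') * x (g j') = A.mulVec y j := by
      rw [Matrix.mulVec, dotProduct]
      apply Finset.sum_congr rfl
      intro j' _
      rw [hxg j', hA]
      rfl
    rw [h1]
    have := congrFun hy j
    rw [Matrix.add_mulVec, Pi.add_apply] at this
    have h2 : (t0 • (1 : Matrix (Fin k) (Fin k) ℝ)).mulVec y j = t0 * y j := by
      rw [Matrix.smul_mulVec, Matrix.one_mulVec]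
      rfl
    rw [h2] at this
    rw [Pi.zero_apply] at this
    linarith
  refine ⟨x, hxne, ?_⟩
  intro i
  by_cases hmem : ∃ j, g j = i
  · obtain ⟨j, rfl⟩ := hmem
    rw [hMx j, hxg j]
    have ht0nn : 0 ≤ t0 := ht0mem.1
    nlinarith [sq_nonneg (y j)]
  · push_neg at hmem
    rw [hsupp i hmem, zero_mul]

/-- Construction of a q with two distinct solutions from a sign-reversed vector. -/
lemma two_solutions {M : Matrix (Fin n) (Fin n) ℝ} {x : Fin n → ℝ} (hxne : x ≠ 0)
    (hrev : ∀ i, x i * M.mulVec x i ≤ 0) :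
    ∃ q z1 z2, z1 ≠ z2 ∧ SolvesLCP M q z1 ∧ SolvesLCP M q z2 := by
  classical
  set z1 : Fin n → ℝ := fun i => max (x i) 0 with hz1
  set z2 : Fin n → ℝ := fun i => max (-x i) 0 with hz2
  have hsub : z1 - z2 = x := by
    funext i
    simp only [Pi.sub_apply, hz1, hz2]
    rcases le_total (x i) 0 with h | h
    · rw [max_eq_right h, max_eq_left (by linarith)]; ring
    · rw [max_eq_left h, max_eq_right (by linarith)]; ring
  set q : Fin n → ℝ := fun i => -min (M.mulVec z1 i) (M.mulVec z2 i) with hq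
  have hMx : M.mulVec x = M.mulVec z1 - M.mulVec z2 := by
    rw [← hsub, Matrix.mulVec_sub]
  have hq1 : ∀ i, 0 ≤ q i + M.mulVec z1 i := by
    intro i
    have := min_le_left (M.mulVec z1 i) (M.mulVec z2 i)
    simp only [hq]
    linarith
  have hq2 : ∀ i, 0 ≤ q i + M.mulVec z2 i := by
    intro i
    have := min_le_right (M.mulVec z1 i) (M.mulVec z2 i)
    simp only [hq]
    linarith
  have hMxi : ∀ i, M.mulVec x i = M.mulVec z1 i - M.mulVec z2 i := by
    intro i
    rw [hMx]
    rfl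
  have hterm1 : ∀ i, (q i + M.mulVec z1 i) * z1 i = 0 := by
    intro i
    rcases le_or_gt (x i) 0 with h | h
    · have : z1 i = 0 := max_eq_right h
      rw [this, mul_zero]
    · have hx1 : 0 ≤ M.mulVec z2 i - M.mulVec z1 i := by
        have h1 := hrev i
        have h2 : M.mulVec x i ≤ 0 := nonpos_of_mul_nonpos_right h1 h
        rw [hMxi i] at h2
        linarith
      have hmin : min (M.mulVec z1 i) (M.mulVec z2 i) = M.mulVec z1 i :=
        min_eq_left (by linarith)
      have : q i + M.mulVec z1 i = 0 := by
        simp only [hq]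
        rw [hmin]
        ring
      rw [this, zero_mul]
  have hterm2 : ∀ i, (q i + M.mulVec z2 i) * z2 i = 0 := by
    intro i
    rcases le_or_gt 0 (x i) with h | h
    · have : z2 i = 0 := max_eq_right (by linarith)
      rw [this, mul_zero]
    · have hx1 : 0 ≤ M.mulVec z1 i - M.mulVec z2 i := by
        have h1 := hrev i
        have h2 : 0 ≤ M.mulVec x i := nonneg_of_mul_nonpos_right h1 h
        rw [hMxi i] at h2
        linarith
      have hmin : min (M.mulVec z1 i) (M.mulVec z2 i) = M.mulVec z2 i :=
        min_eq_right (by linarith)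
      have : q i + M.mulVec z2 i = 0 := by
        simp only [hq]
        rw [hmin]
        ring
      rw [this, zero_mul]
  have hzne : z1 ≠ z2 := by
    intro h
    apply hxne
    rw [← hsub, h, sub_self]
  exact ⟨q, z1, z2, hzne,
    ⟨hq1, fun i => le_max_right _ _, Finset.sum_eq_zero (fun i _ => hterm1 i)⟩,
    ⟨hq2, fun i => le_max_right _ _, Finset.sum_eq_zero (fun i _ => hterm2 i)⟩⟩



end LCPAux

theorem stmt5 {n : ℕ} (M : Matrix (Fin n) (Fin n) ℝ) :
    IsPMatrix M ↔ ∀ q : Fin n → ℝ, ∃! z : Fin n → ℝ, SolvesLCP M q z := by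
  constructor
  · intro hM q
    obtain ⟨z, hz⟩ := LCPAux.lcp_exists M hM q
    exact ⟨z, hz, fun y hy => LCPAux.unique_sol hM hy hz⟩
  · intro h s hs
    by_contra hdet
    obtain ⟨x, hxne, hrev⟩ := LCPAux.reversal_of_not_p hs (not_lt.mp hdet)
    obtain ⟨q, z1, z2, hne, h1, h2⟩ := LCPAux.two_solutions hxne hrev
    exact hne ((h q).unique h1 h2)
end

section
/- Let M̲ ≤ M̄ be n×n real matrices and q̲ ≤ q̄ be vectors in ℝⁿ (entrywise), and let w, z ∈ ℝⁿ with z ≥ 0. Then there exist a matrix M with M̲ ≤ M ≤ M̄ entrywise and a vector q with q̲ ≤ q ≤ q̄ entrywise such that w − M z = q, if and only if for every index i one has w_i − Σ_{j=1}^{n} m̄_{ij} z_j ≤ q̄_i and q̲_i ≤ w_i − Σ_{j=1}^{n} m̲_{ij} z_j. -/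
theorem stmt6 {n : ℕ} (Ml Mu : Matrix (Fin n) (Fin n) ℝ) (ql qu w z : Fin n → ℝ)
    (hM : ∀ i j, Ml i j ≤ Mu i j) (hq : ∀ i, ql i ≤ qu i) (hz : ∀ i, 0 ≤ z i) :
    (∃ (M : Matrix (Fin n) (Fin n) ℝ) (q : Fin n → ℝ),
      (∀ i j, Ml i j ≤ M i j ∧ M i j ≤ Mu i j) ∧ (∀ i, ql i ≤ q i ∧ q i ≤ qu i) ∧
      (∀ i, w i - M.mulVec z i = q i)) ↔
    (∀ i, w i - ∑ j, Mu i j * z j ≤ qu i ∧ ql i ≤ w i - ∑ j, Ml i j * z j) := by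
  constructor
  · rintro ⟨M, q, hMb, hqb, heq⟩ i
    have hsum1 : ∑ j, M i j * z j ≤ ∑ j, Mu i j * z j :=
      Finset.sum_le_sum fun j _ => mul_le_mul_of_nonneg_right (hMb i j).2 (hz j)
    have hsum2 : ∑ j, Ml i j * z j ≤ ∑ j, M i j * z j :=
      Finset.sum_le_sum fun j _ => mul_le_mul_of_nonneg_right (hMb i j).1 (hz j)
    have hmv : M.mulVec z i = ∑ j, M i j * z j := by
      simp [Matrix.mulVec, dotProduct]
    have hqi := heq i
    rw [hmv] at hqi
    exact ⟨by linarith [(hqb i).2], by linarith [(hqb i).1]⟩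
  · intro h
    set s : Fin n → ℝ := fun i => ∑ j, Ml i j * z j with hs
    set S : Fin n → ℝ := fun i => ∑ j, Mu i j * z j with hS
    have hsS : ∀ i, s i ≤ S i := fun i =>
      Finset.sum_le_sum fun j _ => mul_le_mul_of_nonneg_right (hM i j) (hz j)
    set q : Fin n → ℝ := fun i => max (ql i) (w i - S i) with hqdef
    set t : Fin n → ℝ := fun i =>
      if S i = s i then 0 else (w i - q i - s i) / (S i - s i) with htdef
    have hq1 : ∀ i, w i - S i ≤ q i := fun i => le_max_right _ _
    have hq2 : ∀ i, q i ≤ w i - s i := fun i =>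
      max_le (by linarith [(h i).2]) (by linarith [hsS i])
    have ht0 : ∀ i, 0 ≤ t i ∧ t i ≤ 1 := by
      intro i
      by_cases hc : S i = s i
      · simp [htdef, hc]
      · have hlt : s i < S i := lt_of_le_of_ne (hsS i) (Ne.symm hc)
        constructor
        · simp only [htdef, if_neg hc]
          exact div_nonneg (by linarith [hq2 i]) (by linarith)
        · simp only [htdef, if_neg hc]
          rw [div_le_one (by linarith)]
          linarith [hq1 i]
    refine ⟨fun i j => Ml i j + t i * (Mu i j - Ml i j), q, ?_, ?_, ?_⟩
    · intro i j
      obtain ⟨h0, h1⟩ := ht0 i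
      have hd : (0:ℝ) ≤ Mu i j - Ml i j := by linarith [hM i j]
      constructor
      · show Ml i j ≤ Ml i j + t i * (Mu i j - Ml i j)
        nlinarith
      · show Ml i j + t i * (Mu i j - Ml i j) ≤ Mu i j
        nlinarith
    · intro i
      exact ⟨le_max_left _ _, max_le (hq i) (by linarith [(h i).1])⟩
    · intro i
      have hmv : Matrix.mulVec (fun i j => Ml i j + t i * (Mu i j - Ml i j)) z i
          = ∑ j, (Ml i j + t i * (Mu i j - Ml i j)) * z j := by
        simp [Matrix.mulVec, dotProduct]
      rw [hmv]
      have hexp : ∑ j, (Ml i j + t i * (Mu i j - Ml i j)) * z j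
          = s i + t i * (S i - s i) := by
        rw [hs, hS]
        rw [Finset.sum_congr rfl (fun j _ => by ring :
          ∀ j ∈ Finset.univ, (Ml i j + t i * (Mu i j - Ml i j)) * z j
            = Ml i j * z j + t i * (Mu i j * z j - Ml i j * z j))]
        rw [Finset.sum_add_distrib, ← Finset.mul_sum, Finset.sum_sub_distrib]
      rw [hexp]
      by_cases hc : S i = s i
      · have hqeq : q i = w i - s i :=
          le_antisymm (hq2 i) (by rw [← hc]; exact hq1 i)
        simp [htdef, hc, hqeq]
      · have hlt : s i < S i := lt_of_le_of_ne (hsS i) (Ne.symm hc)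
        have : t i * (S i - s i) = w i - q i - s i := by
          simp only [htdef, if_neg hc]
          exact div_mul_cancel₀ _ (by linarith : S i - s i ≠ 0)
        linarith
end

section
/- Let z₁ > 0, z₂ > 0 and z₃ ≥ 0 be real numbers, and suppose the real numbers m₁₁, m₁₃, m₂₂, m₂₃, m₁₂ satisfy m̲₁₁ ≤ m₁₁ ≤ m̄₁₁, m̲₁₃ ≤ m₁₃ ≤ m̄₁₃, m̲₂₂ ≤ m₂₂ ≤ m̄₂₂, m̲₂₃ ≤ m₂₃ ≤ m̄₂₃, together with q̲₁ ≤ −m₁₁ z₁ − m₁₂ z₂ − m₁₃ z₃ ≤ q̄₁ and q̲₂ ≤ −m₁₂ z₁ − m₂₂ z₂ − m₂₃ z₃ ≤ q̄₂. Then 0 ≤ m̄₂₂ z₂² + m̄₂₃ z₂ z₃ + q̄₂ z₂ − m̲₁₁ z₁² − m̲₁₃ z₁ z₃ − q̲₁ z₁ and 0 ≤ m̄₁₁ z₁² + m̄₁₃ z₁ z₃ + q̄₁ z₁ − m̲₂₂ z₂² − m̲₂₃ z₂ z₃ − q̲₂ z₂. -/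
theorem stmt8 (z₁ z₂ z₃ : ℝ) (hz₁ : 0 < z₁) (hz₂ : 0 < z₂) (hz₃ : 0 ≤ z₃)
    (ml₁₁ mu₁₁ ml₁₃ mu₁₃ ml₂₂ mu₂₂ ml₂₃ mu₂₃ ql₁ qu₁ ql₂ qu₂ m₁₁ m₁₃ m₂₂ m₂₃ m₁₂ : ℝ)
    (h₁₁ : ml₁₁ ≤ m₁₁ ∧ m₁₁ ≤ mu₁₁) (h₁₃ : ml₁₃ ≤ m₁₃ ∧ m₁₃ ≤ mu₁₃)
    (h₂₂ : ml₂₂ ≤ m₂₂ ∧ m₂₂ ≤ mu₂₂) (h₂₃ : ml₂₃ ≤ m₂₃ ∧ m₂₃ ≤ mu₂₃)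
    (hq₁ : ql₁ ≤ -m₁₁ * z₁ - m₁₂ * z₂ - m₁₃ * z₃ ∧ -m₁₁ * z₁ - m₁₂ * z₂ - m₁₃ * z₃ ≤ qu₁)
    (hq₂ : ql₂ ≤ -m₁₂ * z₁ - m₂₂ * z₂ - m₂₃ * z₃ ∧ -m₁₂ * z₁ - m₂₂ * z₂ - m₂₃ * z₃ ≤ qu₂) :
    0 ≤ mu₂₂ * z₂ ^ 2 + mu₂₃ * z₂ * z₃ + qu₂ * z₂ - ml₁₁ * z₁ ^ 2 - ml₁₃ * z₁ * z₃ - ql₁ * z₁ ∧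
    0 ≤ mu₁₁ * z₁ ^ 2 + mu₁₃ * z₁ * z₃ + qu₁ * z₁ - ml₂₂ * z₂ ^ 2 - ml₂₃ * z₂ * z₃ - ql₂ * z₂ := by
  obtain ⟨h1,h2⟩ := h₁₁; obtain ⟨h3,h4⟩ := h₁₃; obtain ⟨h5,h6⟩ := h₂₂
  obtain ⟨h7,h8⟩ := h₂₃; obtain ⟨h9,h10⟩ := hq₁; obtain ⟨h11,h12⟩ := hq₂
  constructor
  · nlinarith [mul_le_mul_of_nonneg_left h12 hz₂.le, mul_le_mul_of_nonneg_left h9 hz₁.le,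
      mul_le_mul_of_nonneg_right h6 (mul_pos hz₂ hz₂).le,
      mul_le_mul_of_nonneg_right h8 (mul_nonneg hz₂.le hz₃),
      mul_le_mul_of_nonneg_right h1 (mul_pos hz₁ hz₁).le,
      mul_le_mul_of_nonneg_right h3 (mul_nonneg hz₁.le hz₃)]
  · nlinarith [mul_le_mul_of_nonneg_left h10 hz₁.le, mul_le_mul_of_nonneg_left h11 hz₂.le,
      mul_le_mul_of_nonneg_right h2 (mul_pos hz₁ hz₁).le,
      mul_le_mul_of_nonneg_right h4 (mul_nonneg hz₁.le hz₃),
      mul_le_mul_of_nonneg_right h5 (mul_pos hz₂ hz₂).le,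
      mul_le_mul_of_nonneg_right h7 (mul_nonneg hz₂.le hz₃)]
end

section
/- Let a > 0 and b > 0 be real numbers and let c, d be real numbers with c·d ≠ 0. Then the symmetric 3×3 real matrix A with rows (−a, 0, −c/2), (0, b, d/2), (−c/2, d/2, 0) has three pairwise distinct real eigenvalues λ₁ < λ₂ < λ₃ satisfying λ₁ < −a < λ₂ < b < λ₃; in particular λ₁ < 0 < λ₃. -/
open Polynomial Filter

/-- det(A - μ•1) = 0 implies μ is an eigenvalue of toLin' A. -/
lemma aux_eig {n : ℕ} (A : Matrix (Fin n) (Fin n) ℝ) (μ : ℝ)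
    (h : (A - μ • (1 : Matrix (Fin n) (Fin n) ℝ)).det = 0) :
    Module.End.HasEigenvalue (Matrix.toLin' A) μ := by
  obtain ⟨v, hv0, hv⟩ := Matrix.exists_mulVec_eq_zero_iff.2 h
  apply Module.End.hasEigenvalue_of_hasEigenvector (x := v)
  refine ⟨Module.End.mem_eigenspace_iff.2 ?_, hv0⟩
  rw [Matrix.toLin'_apply]
  have := hv
  rw [Matrix.sub_mulVec, Matrix.smul_mulVec, Matrix.one_mulVec, sub_eq_zero] at this
  exact this

theorem stmt10 (a b c d : ℝ) (ha : 0 < a) (hb : 0 < b) (hcd : c * d ≠ 0) :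
    ∃ lam₁ lam₂ lam₃ : ℝ,
      Module.End.HasEigenvalue (Matrix.toLin' (!![-a, 0, -c/2; 0, b, d/2; -c/2, d/2, 0])) lam₁ ∧
      Module.End.HasEigenvalue (Matrix.toLin' (!![-a, 0, -c/2; 0, b, d/2; -c/2, d/2, 0])) lam₂ ∧
      Module.End.HasEigenvalue (Matrix.toLin' (!![-a, 0, -c/2; 0, b, d/2; -c/2, d/2, 0])) lam₃ ∧
      lam₁ < lam₂ ∧ lam₂ < lam₃ ∧
      lam₁ < -a ∧ -a < lam₂ ∧ lam₂ < b ∧ b < lam₃ ∧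
      lam₁ < 0 ∧ 0 < lam₃ := by
  have hc : c ≠ 0 := fun h => hcd (by simp [h])
  have hd : d ≠ 0 := fun h => hcd (by simp [h])
  set A : Matrix (Fin 3) (Fin 3) ℝ := !![-a, 0, -c/2; 0, b, d/2; -c/2, d/2, 0] with hA
  -- the characteristic-type function
  set f : ℝ → ℝ := fun x => -x^3 + (b-a)*x^2 + (a*b + d^2/4 + c^2/4)*x + (a*d^2/4 - b*c^2/4) with hf
  have hdet : ∀ μ : ℝ, (A - μ • (1 : Matrix (Fin 3) (Fin 3) ℝ)).det = f μ := by
    intro μ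
    rw [hA]
    rw [show (!![-a, 0, -c/2; 0, b, d/2; -c/2, d/2, 0] - μ • (1 : Matrix (Fin 3) (Fin 3) ℝ))
        = !![-a-μ, 0, -c/2; 0, b-μ, d/2; -c/2, d/2, -μ] by
      ext i j; fin_cases i <;> fin_cases j <;>
        simp [Matrix.one_apply]]
    rw [Matrix.det_fin_three]
    simp [hf, Matrix.cons_val_zero, Matrix.cons_val_one]
    ring
  have hcont : Continuous f := by fun_prop
  -- values
  have hfa : f (-a) < 0 := by
    have : f (-a) = -(c^2*(a+b))/4 := by simp [hf]; ring
    rw [this]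
    have : 0 < c^2 * (a+b) := by positivity
    linarith
  have hfb : 0 < f b := by
    have : f b = d^2*(a+b)/4 := by simp [hf]; ring
    rw [this]; positivity
  -- tendsto
  set P : ℝ[X] := C (-1) * X^3 + C (b-a) * X^2 + C (a*b + d^2/4 + c^2/4) * X + C (a*d^2/4 - b*c^2/4) with hP
  have hPeval : ∀ x, P.eval x = f x := by intro x; simp [hP, hf]
  have hPdeg : P.degree = 3 := by rw [hP]; compute_degree!
  have hPlead : P.leadingCoeff = -1 := by
    rw [Polynomial.leadingCoeff, Polynomial.natDegree_eq_of_degree_eq_some hPdeg, hP]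
    simp [Polynomial.coeff_add, Polynomial.coeff_C_mul, Polynomial.coeff_X_pow,
      Polynomial.coeff_C, Polynomial.coeff_sub, Polynomial.coeff_mul_X_pow']
  have htop : Tendsto f atTop atBot := by
    have := P.tendsto_atBot_of_leadingCoeff_nonpos (by rw [hPdeg]; norm_num) (by rw [hPlead]; norm_num)
    simpa [funext hPeval] using this
  set Q : ℝ[X] := X^3 + C (b-a) * X^2 + C (-(a*b + d^2/4 + c^2/4)) * X + C (a*d^2/4 - b*c^2/4) with hQ
  have hQeval : ∀ x, Q.eval x = f (-x) := by intro x; simp [hQ, hf]; ring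
  have hQdeg : Q.degree = 3 := by rw [hQ]; compute_degree!
  have hQlead : Q.leadingCoeff = 1 := by
    rw [Polynomial.leadingCoeff, Polynomial.natDegree_eq_of_degree_eq_some hQdeg, hQ]
    simp [Polynomial.coeff_add, Polynomial.coeff_C_mul, Polynomial.coeff_X_pow,
      Polynomial.coeff_C, Polynomial.coeff_sub, Polynomial.coeff_mul_X_pow']
  have hbot : Tendsto (fun x => f (-x)) atTop atTop := by
    have := Q.tendsto_atTop_of_leadingCoeff_nonneg (by rw [hQdeg]; norm_num) (by rw [hQlead]; norm_num)
    simpa [funext hQeval] using this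
  -- find endpoints
  obtain ⟨R, hR1, hR2⟩ := ((htop.eventually (eventually_lt_atBot 0)).and (eventually_gt_atTop b)).exists
  obtain ⟨L', hL1, hL2⟩ := ((hbot.eventually (eventually_gt_atTop 0)).and (eventually_gt_atTop a)).exists
  set L := -L' with hL
  have hLa : L < -a := by simp [hL]; linarith
  have hfL : 0 < f L := hL1
  -- three roots via IVT
  have hcon : ∀ s : Set ℝ, ContinuousOn f s := fun s => hcont.continuousOn
  obtain ⟨l₁, hl₁m, hl₁⟩ := intermediate_value_Icc' (le_of_lt hLa) (hcon _) ⟨le_of_lt hfa, le_of_lt hfL⟩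
  obtain ⟨l₂, hl₂m, hl₂⟩ := intermediate_value_Icc (by linarith : -a ≤ b) (hcon _) ⟨le_of_lt hfa, le_of_lt hfb⟩
  obtain ⟨l₃, hl₃m, hl₃⟩ := intermediate_value_Icc' (le_of_lt hR2) (hcon _) ⟨le_of_lt hR1, le_of_lt hfb⟩
  have h1a : l₁ < -a := lt_of_le_of_ne hl₁m.2 (fun h => by rw [h] at hl₁; linarith)
  have h2a : -a < l₂ := lt_of_le_of_ne hl₂m.1 (fun h => by rw [← h] at hl₂; linarith)
  have h2b : l₂ < b := lt_of_le_of_ne hl₂m.2 (fun h => by rw [h] at hl₂; linarith)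
  have h3b : b < l₃ := lt_of_le_of_ne hl₃m.1 (fun h => by rw [← h] at hl₃; linarith)
  refine ⟨l₁, l₂, l₃, aux_eig A l₁ (by rw [hdet]; exact hl₁),
    aux_eig A l₂ (by rw [hdet]; exact hl₂), aux_eig A l₃ (by rw [hdet]; exact hl₃),
    by linarith, by linarith, h1a, h2a, h2b, h3b, by linarith, by linarith⟩
end

section
/- Let [M] be the set of 2×2 real matrices M with m₁₁ ∈ [1/8, 1], m₁₂ ∈ [−1/4, −1/5], m₂₁ ∈ [−1/4, −1/5], m₂₂ = 1, and let [q] be the set of vectors q ∈ ℝ² with q₁ ∈ [−3, −1], q₂ ∈ [1, 2]. Then z = (100/3, 14/3) solves LCP(M, q) for M with rows (1/8, −1/4), (−1/5, 1) and q = (−3, 2), so z ∈ Σ([M],[q]); however, there exist no symmetric matrix M ∈ [M] and no vector q ∈ [q] such that z solves LCP(M, q), so z ∉ Σ_sym([M],[q]). -/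
/-- Membership of a 2×2 matrix in the interval matrix of Example 6.1.1. -/
def MemIntervalM (M : Matrix (Fin 2) (Fin 2) ℝ) : Prop :=
  M 0 0 ∈ Set.Icc (1/8 : ℝ) 1 ∧ M 0 1 ∈ Set.Icc (-(1/4) : ℝ) (-(1/5)) ∧
  M 1 0 ∈ Set.Icc (-(1/4) : ℝ) (-(1/5)) ∧ M 1 1 = 1

/-- Membership of a vector in the interval vector of Example 6.1.1. -/
def MemIntervalQ (q : Fin 2 → ℝ) : Prop :=
  q 0 ∈ Set.Icc (-3 : ℝ) (-1) ∧ q 1 ∈ Set.Icc (1 : ℝ) 2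

theorem stmt12 :
    (SolvesLCP !![(1/8 : ℝ), -(1/4); -(1/5), 1] ![-3, 2] ![100/3, 14/3] ∧
      MemIntervalM !![(1/8 : ℝ), -(1/4); -(1/5), 1] ∧ MemIntervalQ ![-3, 2]) ∧
    ¬ ∃ (M : Matrix (Fin 2) (Fin 2) ℝ) (q : Fin 2 → ℝ),
        MemIntervalM M ∧ M.IsSymm ∧ MemIntervalQ q ∧
        SolvesLCP M q ![100/3, 14/3] := by
  constructor
  · refine ⟨⟨?_, ?_, ?_⟩, ?_, ?_⟩
    · intro i
      fin_cases i <;>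
        simp [Matrix.mulVec, dotProduct, Fin.sum_univ_two] <;> norm_num
    · intro i
      fin_cases i <;> norm_num
    · simp [Matrix.mulVec, dotProduct, Fin.sum_univ_two]
      norm_num
    · constructor
      · constructor <;> norm_num
      · refine ⟨⟨by norm_num, by norm_num⟩, ⟨by norm_num, by norm_num⟩, by norm_num⟩
    · exact ⟨⟨by norm_num, by norm_num⟩, ⟨by norm_num, by norm_num⟩⟩
  · rintro ⟨M, q, ⟨hM00, hM01, hM10, hM11⟩, hsym, ⟨hq0, hq1⟩, hpos, hznn, hsum⟩
    have hsym01 : M 0 1 = M 1 0 := by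
      have := congrFun (congrFun hsym.eq 1) 0
      simpa [Matrix.transpose_apply] using this
    have hmv0 : M.mulVec ![100/3, 14/3] 0 = M 0 0 * (100/3) + M 0 1 * (14/3) := by
      simp [Matrix.mulVec, dotProduct, Fin.sum_univ_two]
    have hmv1 : M.mulVec ![100/3, 14/3] 1 = M 1 0 * (100/3) + M 1 1 * (14/3) := by
      simp [Matrix.mulVec, dotProduct, Fin.sum_univ_two]
    have h0 := hpos 0
    have h1 := hpos 1
    rw [Fin.sum_univ_two] at hsum
    have hz0 : (![100/3, 14/3] : Fin 2 → ℝ) 0 = 100/3 := rfl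
    have hz1 : (![100/3, 14/3] : Fin 2 → ℝ) 1 = 14/3 := rfl
    rw [hz0, hz1] at hsum
    -- each term is nonneg; sum zero forces both zero
    have e0 : q 0 + M.mulVec ![100/3, 14/3] 0 = 0 := by nlinarith
    have e1 : q 1 + M.mulVec ![100/3, 14/3] 1 = 0 := by nlinarith
    rw [hmv0] at e0
    rw [hmv1, hM11] at e1
    obtain ⟨ha1, ha2⟩ := hM10
    obtain ⟨hb1, hb2⟩ := hM00
    obtain ⟨hc1, hc2⟩ := hq0
    obtain ⟨hd1, hd2⟩ := hq1
    rw [hsym01] at e0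
    nlinarith
end

section
/- Let [M] be the set of 2×2 real matrices M with m₁₁ ∈ [1/8, 1], m₁₂ ∈ [−1/4, −1/5], m₂₁ ∈ [−1/4, −1/5], m₂₂ = 1, and let [q] be the set of vectors q ∈ ℝ² with q₁ ∈ [−3, −1], q₂ ∈ [1, 2]. Then every vector z that solves LCP(M, q) for some M ∈ [M] and q ∈ [q] satisfies (1, 0) ≤ z ≤ (44, 10) entrywise; moreover (1, 0) solves LCP(M̄, q̄) with M̄ having rows (1, −1/5), (−1/5, 1) and q̄ = (−1, 2), and (44, 10) solves LCP(M̲, q̲) with M̲ having rows (1/8, −1/4), (−1/4, 1) and q̲ = (−3, 1). -/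
theorem stmt13 :
    (∀ (M : Matrix (Fin 2) (Fin 2) ℝ) (q z : Fin 2 → ℝ),
      MemIntervalM M → MemIntervalQ q → SolvesLCP M q z →
      (∀ i, (![1, 0] : Fin 2 → ℝ) i ≤ z i) ∧ (∀ i, z i ≤ (![44, 10] : Fin 2 → ℝ) i)) ∧
    SolvesLCP !![(1 : ℝ), -(1/5); -(1/5), 1] ![-1, 2] ![1, 0] ∧
    SolvesLCP !![(1/8 : ℝ), -(1/4); -(1/4), 1] ![-3, 1] ![44, 10] := by
  refine ⟨?_, ?_, ?_⟩
  · intro M q z hM hq hz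
    obtain ⟨⟨h00l, h00u⟩, ⟨h01l, h01u⟩, ⟨h10l, h10u⟩, h11⟩ := hM
    obtain ⟨⟨hq0l, hq0u⟩, ⟨hq1l, hq1u⟩⟩ := hq
    obtain ⟨hw, hzn, hsum⟩ := hz
    have hw0 := hw 0
    have hw1 := hw 1
    have hz0 := hzn 0
    have hz1 := hzn 1
    simp only [Matrix.mulVec, dotProduct, Fin.sum_univ_two, h11, one_mul] at hw0 hw1 hsum
    -- products are zero
    have hp0 : (q 0 + (M 0 0 * z 0 + M 0 1 * z 1)) * z 0 = 0 := by
      nlinarith [mul_nonneg hw0 hz0, mul_nonneg hw1 hz1]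
    have hp1 : (q 1 + (M 1 0 * z 0 + z 1)) * z 1 = 0 := by
      nlinarith [mul_nonneg hw0 hz0, mul_nonneg hw1 hz1]
    -- z 0 ≠ 0, hence w0 = 0
    have hz0ne : z 0 ≠ 0 := by
      intro h
      rw [h] at hw0
      nlinarith [mul_nonpos_of_nonpos_of_nonneg (le_trans h01u (by norm_num)) hz1]
    have hw0eq : q 0 + (M 0 0 * z 0 + M 0 1 * z 1) = 0 :=
      (mul_eq_zero.mp hp0).resolve_right hz0ne
    -- lower bound for z 0
    have hm : 1 ≤ M 0 0 * z 0 := by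
      nlinarith [mul_nonpos_of_nonpos_of_nonneg (le_trans h01u (by norm_num)) hz1]
    have hlb0 : 1 ≤ z 0 := by nlinarith
    -- upper bounds
    have hub : z 1 ≤ 10 ∧ z 0 ≤ 44 := by
      rcases mul_eq_zero.mp hp1 with hw1eq | hz1eq
      · have h1 : z 1 ≤ -1 + z 0 / 4 := by
          have := mul_le_mul_of_nonneg_right h10l hz0
          linarith
        have h2 : z 0 / 8 ≤ 3 + z 1 / 4 := by
          have a := mul_le_mul_of_nonneg_right h00l hz0
          have b := mul_le_mul_of_nonneg_right h01l hz1
          linarith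
        constructor <;> linarith
      · have h2 : z 0 / 8 ≤ 3 + z 1 / 4 := by
          have a := mul_le_mul_of_nonneg_right h00l hz0
          have b := mul_le_mul_of_nonneg_right h01l hz1
          linarith
        rw [hz1eq]
        constructor <;> linarith
    refine ⟨fun i => ?_, fun i => ?_⟩ <;> fin_cases i <;> simp <;> [skip; exact hz1; skip; skip]
    · exact hlb0
    · exact hub.2
    · exact hub.1
  · refine ⟨fun i => ?_, fun i => ?_, ?_⟩ <;>
      [fin_cases i; fin_cases i; skip] <;>
      norm_num [Matrix.mulVec, dotProduct, Fin.sum_univ_two]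
  · refine ⟨fun i => ?_, fun i => ?_, ?_⟩ <;>
      [fin_cases i; fin_cases i; skip] <;>
      norm_num [Matrix.mulVec, dotProduct, Fin.sum_univ_two]
end
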